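/- For every positive integer n and every natural number r, 𝒢(n, r) = 1 if and only if z_1(n) = 1, r ≥ 1, and either the Zeckendorf representation of n has only one part or r < z_2(n). -/

import Mathlib

/-- `IsZeck n l` says that `l` is the Zeckendorf representation of `n`, recorded as the
list of indices of the Fibonacci parts in increasing order: every index is at least `2`,
consecutive indices differ by at least `2` (no two consecutive Fibonacci numbers), and the
corresponding Fibonacci numbers sum to `n`.  The parts of the Zeckendorf representation in
increasing order are then `z₁(n) = Nat.fib l.headI`, `z₂(n) = Nat.fib (l.getD 1 0)`, etc. -/
def IsZeck (n : ℕ) (l : List ℕ) : Prop :=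
  (∀ i ∈ l, 2 ≤ i) ∧ l.Chain' (fun a b => a + 2 ≤ b) ∧ (l.map Nat.fib).sum = n

/-- The Grundy values of single-heap Fibonacci nim positions `(n, r)`, where `n` is the heap
size and `r` is the maximal number of tokens that may be removed on the next move:
`grundy n r` is the least natural number not of the form
`grundy (n - k) (min (2 * k) (n - k))` for some `k` with `1 ≤ k ≤ min r n`.
In particular `grundy 0 r = 0` and `grundy n 0 = 0`. -/
noncomputable def grundy (n r : ℕ) : ℕ :=
  sInf {m : ℕ | ∀ k, 1 ≤ k → k ≤ min r n → grundy (n - k) (min (2 * k) (n - k)) ≠ m}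
termination_by n
decreasing_by
  have : k ≤ n := le_trans ‹k ≤ min r n› (min_le_right _ _)
  omega

def childSet (n r : ℕ) : Set ℕ :=
  {m : ℕ | ∀ k, 1 ≤ k → k ≤ min r n → grundy (n - k) (min (2 * k) (n - k)) ≠ m}

lemma grundy_def (n r : ℕ) : grundy n r = sInf (childSet n r) := by rw [grundy]; rfl

lemma childSet_nonempty (n r : ℕ) : (childSet n r).Nonempty := by
  refine ⟨(Finset.Icc 1 (min r n)).sup (fun k => grundy (n-k) (min (2*k) (n-k))) + 1, ?_⟩
  intro k h1 h2 heq
  have : grundy (n-k) (min (2*k) (n-k)) ≤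
      (Finset.Icc 1 (min r n)).sup (fun k => grundy (n-k) (min (2*k) (n-k))) :=
    Finset.le_sup (f := fun k => grundy (n-k) (min (2*k) (n-k))) (Finset.mem_Icc.mpr ⟨h1, h2⟩)
  omega

lemma grundy_eq_zero_iff' (n r : ℕ) :
    grundy n r = 0 ↔ ∀ k, 1 ≤ k → k ≤ min r n → grundy (n - k) (min (2 * k) (n - k)) ≠ 0 := by
  rw [grundy_def, Nat.sInf_eq_zero]
  constructor
  · rintro (h | h)
    · exact h
    · exact absurd h (Set.nonempty_iff_ne_empty.mp (childSet_nonempty n r))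
  · exact fun h => Or.inl h

lemma grundy_eq_one_iff'' (n r : ℕ) :
    grundy n r = 1 ↔ (∀ k, 1 ≤ k → k ≤ min r n → grundy (n - k) (min (2 * k) (n - k)) ≠ 1) ∧
      (∃ k, 1 ≤ k ∧ k ≤ min r n ∧ grundy (n - k) (min (2 * k) (n - k)) = 0) := by
  rw [grundy_def]
  constructor
  · intro h
    have hmem : (1 : ℕ) ∈ childSet n r := h ▸ Nat.sInf_mem (childSet_nonempty n r)
    refine ⟨hmem, ?_⟩
    by_contra hc
    push_neg at hc
    have h0 : (0 : ℕ) ∈ childSet n r := fun k h1 h2 => hc k h1 h2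
    have := Nat.sInf_le h0
    omega
  · rintro ⟨h1, k, hk1, hk2, hk0⟩
    have hle : sInf (childSet n r) ≤ 1 := Nat.sInf_le h1
    have hne : sInf (childSet n r) ≠ 0 := by
      intro h0
      have := Nat.sInf_mem (childSet_nonempty n r)
      rw [h0] at this
      exact this k hk1 hk2 hk0
    omega

lemma grundy_zero (r : ℕ) : grundy 0 r = 0 := by
  rw [grundy_def, Nat.sInf_eq_zero]
  left
  intro k h1 h2
  simp at h2
  omega
lemma two_mul_fib_lt {a b : ℕ} (ha : 2 ≤ a) (hab : a + 2 ≤ b) : 2 * Nat.fib a < Nat.fib b := by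
  have h1 : Nat.fib a < Nat.fib (a+1) := Nat.fib_lt_fib_succ ha
  have h2 : Nat.fib (a+2) = Nat.fib a + Nat.fib (a+1) := Nat.fib_add_two
  have h3 : Nat.fib (a+2) ≤ Nat.fib b := Nat.fib_mono hab
  omega

lemma eq_two_of_fib {a : ℕ} (h2 : 2 ≤ a) (h : Nat.fib a = 1) : a = 2 := by
  by_contra hne
  have h3 : Nat.fib 3 ≤ Nat.fib a := Nat.fib_mono (by omega)
  have : Nat.fib 3 = 2 := rfl
  omega

lemma IsZeck.append {x y : ℕ} {l₁ l₂ : List ℕ} (h1 : IsZeck x l₁) (h2 : IsZeck y l₂)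
    (h : ∀ a ∈ l₁, ∀ b ∈ l₂, a + 2 ≤ b) : IsZeck (x + y) (l₁ ++ l₂) := by
  obtain ⟨h1a, h1b, h1c⟩ := h1
  obtain ⟨h2a, h2b, h2c⟩ := h2
  refine ⟨?_, ?_, ?_⟩
  · intro i hi
    rcases List.mem_append.1 hi with hh | hh
    exacts [h1a i hh, h2a i hh]
  · exact h1b.append h2b (fun p hp q hq =>
      h p (List.mem_of_mem_getLast? hp) q (List.mem_of_mem_head? hq))
  · simp [h1c, h2c]

lemma zeck_cons {n a : ℕ} {t : List ℕ} (h : IsZeck n (a :: t)) :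
    2 ≤ a ∧ (∀ b ∈ t, a + 2 ≤ b) ∧ IsZeck ((t.map Nat.fib).sum) t ∧
      Nat.fib a + (t.map Nat.fib).sum = n := by
  obtain ⟨h1, h2, h3⟩ := h
  haveI : IsTrans ℕ (fun p q => p + 2 ≤ q) := ⟨fun _ _ _ hp hq => by omega⟩
  have hp := List.isChain_iff_pairwise.mp h2
  rw [List.pairwise_cons] at hp
  refine ⟨h1 a (by simp), hp.1, ⟨fun i hi => h1 i (by simp [hi]), ?_, rfl⟩, by simpa using h3⟩
  exact List.isChain_iff_pairwise.mpr hp.2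

lemma fib_mem_le {m : ℕ} {l : List ℕ} (h : IsZeck m l) {c : ℕ} (hc : c ∈ l) :
    Nat.fib c ≤ m := by
  rw [← h.2.2]
  exact List.single_le_sum (fun x _ => Nat.zero_le x) _ (List.mem_map_of_mem hc)

lemma isZeck_single {c : ℕ} (h : 2 ≤ c) : IsZeck (Nat.fib c) [c] :=
  ⟨by simpa using h, List.isChain_singleton _, by simp⟩

lemma isZeck_two_cons {s : ℕ} {t : List ℕ} (ht : IsZeck s t) (h4 : ∀ b ∈ t, 4 ≤ b) :
    IsZeck (1 + s) (2 :: t) := by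
  obtain ⟨h1, h2, h3⟩ := ht
  refine ⟨?_, ?_, ?_⟩
  · intro i hi
    rcases List.mem_cons.1 hi with rfl | hh
    exacts [le_refl 2, h1 i hh]
  · refine List.isChain_cons.mpr ?_
    exact ⟨fun b hb => by have := h4 b (List.mem_of_mem_head? hb); omega, h2⟩
  · simp [h3]
lemma sub_fib : ∀ i, 2 ≤ i → ∀ j, 1 ≤ j → j < Nat.fib i →
    ∃ c l₂, IsZeck (Nat.fib i - j) (c :: l₂) ∧ (∀ x ∈ c :: l₂, x < i) ∧
      Nat.fib c ≤ 2 * j ∧ (c = 2 → ∀ b ∈ l₂.head?, Nat.fib b ≤ 2 * (j + 1)) := by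
  intro i
  induction i using Nat.strong_induction_on with
  | _ i IH =>
  intro hi2 j hj1 hji
  by_cases hi4 : 4 ≤ i
  · have hfib : Nat.fib i = Nat.fib (i-2) + Nat.fib (i-1) := by
      have h := Nat.fib_add_two (n := i - 2)
      rw [show i - 2 + 2 = i by omega, show i - 2 + 1 = i - 1 by omega] at h
      exact h
    have hfm : Nat.fib (i-1) = Nat.fib (i-3) + Nat.fib (i-2) := by
      have h := Nat.fib_add_two (n := i - 3)
      rw [show i - 3 + 2 = i - 1 by omega, show i - 3 + 1 = i - 2 by omega] at h
      exact h
    have hf3 : Nat.fib (i-3) ≤ Nat.fib (i-2) := Nat.fib_mono (by omega)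
    have hf2pos : 1 ≤ Nat.fib (i-2) := Nat.fib_pos.mpr (by omega)
    rcases lt_or_ge j (Nat.fib (i-2)) with hj | hj
    · obtain ⟨c, l₂, hz, hlt, hc, hcl⟩ := IH (i-2) (by omega) (by omega) j hj1 hj
      have hc2 : 2 ≤ c := hz.1 c (by simp)
      have hzz : IsZeck (Nat.fib i - j) (c :: (l₂ ++ [i-1])) := by
        have hcross : ∀ p ∈ c :: l₂, ∀ q ∈ [i-1], p + 2 ≤ q := by
          intro p hp q hq
          have := hlt p hp
          simp at hq
          omega
        have h := hz.append (isZeck_single (c := i-1) (by omega)) hcross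
        rw [show (Nat.fib (i-2) - j) + Nat.fib (i-1) = Nat.fib i - j by omega] at h
        simpa using h
      refine ⟨c, l₂ ++ [i-1], hzz, ?_, hc, ?_⟩
      · intro x hx
        rcases List.mem_cons.1 hx with rfl | hx
        · have := hlt x (by simp); omega
        · rcases List.mem_append.1 hx with hx | hx
          · have := hlt x (by simp [hx]); omega
          · simp at hx; omega
      · intro hceq b hb
        cases l₂ with
        | nil =>
          simp at hb
          have hsum1 : Nat.fib (i-2) - j = 1 := by
            have := hz.2.2
            simp [hceq] at this
            omega
          subst hb
          omega
        | cons b₂ l₃ =>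
          simp at hb
          subst hb
          exact hcl hceq b₂ (by simp)
    · rcases eq_or_lt_of_le hj with hj0 | hj'
      · refine ⟨i-1, [], ?_, ?_, ?_, ?_⟩
        · have h := isZeck_single (c := i-1) (by omega)
          rwa [show Nat.fib (i-1) = Nat.fib i - j by omega] at h
        · intro x hx; simp at hx; omega
        · omega
        · intro h; omega
      · obtain ⟨c, l₂, hz, hlt, hc, hcl⟩ := IH (i-1) (by omega) (by omega)
          (j - Nat.fib (i-2)) (by omega) (by omega)
        rw [show Nat.fib (i-1) - (j - Nat.fib (i-2)) = Nat.fib i - j by omega] at hz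
        exact ⟨c, l₂, hz, fun x hx => by have := hlt x hx; omega,
          by omega, fun h2 b hb => by have := hcl h2 b hb; omega⟩
  · interval_cases i
    · have : Nat.fib 2 = 1 := rfl
      omega
    · have h3 : Nat.fib 3 = 2 := rfl
      have hj : j = 1 := by omega
      subst hj
      exact ⟨2, [], by rw [h3]; exact isZeck_single (by omega), by simp, by simp, by simp⟩
theorem key : ∀ n, 0 < n → ∀ r (l : List ℕ), IsZeck n l →
    ((grundy n r = 0 ↔ r < Nat.fib l.headI) ∧
     (grundy n r = 1 ↔ Nat.fib l.headI = 1 ∧ 1 ≤ r ∧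
        (l.length = 1 ∨ r < Nat.fib (l.getD 1 0)))) := by
  intro n
  induction n using Nat.strong_induction_on with
  | _ n IH =>
  intro hn r l hl
  obtain ⟨a, t, rfl⟩ : ∃ a t, l = a :: t := by
    cases l with
    | nil => obtain ⟨-, -, h3⟩ := hl; simp at h3; omega
    | cons a t => exact ⟨a, t, rfl⟩
  obtain ⟨ha2, hat, hzt, hsum⟩ := zeck_cons hl
  have hfa1 : 1 ≤ Nat.fib a := Nat.fib_pos.mpr (by omega)
  have hfan : Nat.fib a ≤ n := by omega
  have hA : grundy n r = 0 ↔ r < Nat.fib a := by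
    constructor
    · intro h0
      by_contra hr
      push_neg at hr
      rw [grundy_eq_zero_iff'] at h0
      refine h0 (Nat.fib a) hfa1 (le_min hr hfan) ?_
      cases t with
      | nil =>
        have h0' : n - Nat.fib a = 0 := by simp at hsum; omega
        rw [h0']
        exact grundy_zero _
      | cons b t₂ =>
        obtain ⟨hb2, hbt, hzt₂, hsum₂⟩ := zeck_cons hzt
        have hb : a + 2 ≤ b := hat b (by simp)
        have hfb2 : 2 * Nat.fib a < Nat.fib b := two_mul_fib_lt ha2 hb
        have hfb1 : 1 ≤ Nat.fib b := Nat.fib_pos.mpr (by omega)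
        have hmpos : 0 < n - Nat.fib a := by omega
        have hmlt : n - Nat.fib a < n := by omega
        have hz' : IsZeck (n - Nat.fib a) (b :: t₂) := by
          have h := hzt
          rwa [show ((b::t₂).map Nat.fib).sum = n - Nat.fib a by omega] at h
        apply ((IH (n - Nat.fib a) hmlt hmpos (min (2 * Nat.fib a) (n - Nat.fib a))
          (b::t₂) hz').1).mpr
        show min _ _ < Nat.fib b
        have := min_le_left (2 * Nat.fib a) (n - Nat.fib a)
        omega
    · intro hr
      rw [grundy_eq_zero_iff']
      intro k hk1 hk2
      have hkr : k ≤ r := le_trans hk2 (min_le_left _ _)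
      have hkf : k < Nat.fib a := lt_of_le_of_lt hkr hr
      have hkn : k < n := lt_of_lt_of_le hkf hfan
      obtain ⟨c, l₂, hz', hlt', hc2k, -⟩ := sub_fib a ha2 k hk1 hkf
      have hcross : ∀ p ∈ c :: l₂, ∀ q ∈ t, p + 2 ≤ q := by
        intro p hp q hq
        have h1 := hlt' p hp
        have h2 := hat q hq
        omega
      have hzm : IsZeck (n - k) (c :: (l₂ ++ t)) := by
        have h := hz'.append hzt hcross
        rw [show Nat.fib a - k + (t.map Nat.fib).sum = n - k by omega] at h
        simpa using h
      have hfcm : Nat.fib c ≤ n - k := fib_mem_le hzm (by simp)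
      intro heq
      have h := ((IH (n-k) (by omega) (by omega) (min (2*k) (n-k)) _ hzm).1).mp heq
      simp only [List.headI] at h
      have := le_min hc2k hfcm
      omega
  refine ⟨hA, ?_⟩
  constructor
  · intro h1
    obtain ⟨hno1, k0, hk01, hk02, hk0z⟩ := (grundy_eq_one_iff'' n r).1 h1
    have hra : Nat.fib a ≤ r := by
      by_contra h
      push_neg at h
      have h2 := hA.mpr h
      omega
    have hr1 : 1 ≤ r := le_trans hfa1 hra
    have ha2eq : a = 2 := by
      by_contra hane
      have ha3 : 3 ≤ a := by omega
      have hfa2 : 2 ≤ Nat.fib a := by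
        have h := Nat.fib_mono (show 3 ≤ a from ha3)
        have h3 : Nat.fib 3 = 2 := rfl
        omega
      refine hno1 (Nat.fib a - 1) (by omega) (le_min (by omega) (by omega)) ?_
      set k := Nat.fib a - 1 with hk
      have hm : n - k = 1 + (t.map Nat.fib).sum := by omega
      have hzm : IsZeck (n - k) (2 :: t) := by
        have h := isZeck_two_cons hzt (fun b hb => by have := hat b hb; omega)
        rwa [← hm] at h
      apply ((IH (n-k) (by omega) (by omega) (min (2*k) (n-k)) (2::t) hzm).2).mpr
      refine ⟨rfl, le_min (by omega) (by omega), ?_⟩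
      cases t with
      | nil => left; rfl
      | cons b t₂ =>
        right
        show min (2*k) (n-k) < Nat.fib b
        have h2 := two_mul_fib_lt ha2 (hat b (by simp))
        have := min_le_left (2*k) (n-k)
        omega
    subst ha2eq
    refine ⟨rfl, hr1, ?_⟩
    cases t with
    | nil => left; rfl
    | cons b t₂ =>
      right
      show r < Nat.fib ((2::b::t₂).getD 1 0)
      by_contra hge
      push_neg at hge
      have hge' : Nat.fib b ≤ r := by simpa using hge
      obtain ⟨hb2, hbt, hzt₂, hsum₂⟩ := zeck_cons hzt
      have hb4 : 4 ≤ b := hat b (by simp)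
      have hfb1 : 1 ≤ Nat.fib b := Nat.fib_pos.mpr (by omega)
      have hf2 : Nat.fib 2 = 1 := rfl
      have hfbn : Nat.fib b ≤ n := by omega
      refine hno1 (Nat.fib b) hfb1 (le_min hge' hfbn) ?_
      have hm : n - Nat.fib b = 1 + (t₂.map Nat.fib).sum := by omega
      have hzm : IsZeck (n - Nat.fib b) (2 :: t₂) := by
        have h := isZeck_two_cons hzt₂ (fun q hq => by have := hbt q hq; omega)
        rwa [← hm] at h
      apply ((IH (n - Nat.fib b) (by omega) (by omega)
        (min (2 * Nat.fib b) (n - Nat.fib b)) (2::t₂) hzm).2).mpr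
      refine ⟨rfl, le_min (by omega) (by omega), ?_⟩
      cases t₂ with
      | nil => left; rfl
      | cons c t₃ =>
        right
        show min (2 * Nat.fib b) (n - Nat.fib b) < Nat.fib c
        have h2 := two_mul_fib_lt hb2 (hbt c (by simp))
        have := min_le_left (2 * Nat.fib b) (n - Nat.fib b)
        omega
  · rintro ⟨hfa, hr1, hcond⟩
    have ha2eq : a = 2 := eq_two_of_fib ha2 hfa
    subst ha2eq
    have hf2 : Nat.fib 2 = 1 := rfl
    apply (grundy_eq_one_iff'' n r).2
    constructor
    · intro k hk1 hkmin
      have hkr : k ≤ r := le_trans hkmin (min_le_left _ _)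
      cases t with
      | nil =>
        have hn1 : n = 1 := by simp at hsum; omega
        have hkn : k ≤ n := le_trans hkmin (min_le_right _ _)
        have h0 : n - k = 0 := by omega
        rw [h0, grundy_zero]
        omega
      | cons b t₂ =>
        obtain ⟨hb2, hbt, hzt₂, hsum₂⟩ := zeck_cons hzt
        have hb4 : 4 ≤ b := hat b (by simp)
        have hrb : r < Nat.fib b := by
          rcases hcond with h | h
          · simp at h
          · simpa using h
        have hkb : k < Nat.fib b := lt_of_le_of_lt hkr hrb
        rcases eq_or_lt_of_le hk1 with hk | hk
        · have hm : n - k = ((b::t₂).map Nat.fib).sum := by omega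
          have hzm : IsZeck (n - k) (b :: t₂) := by rw [hm]; exact hzt
          intro heq
          have h := ((IH (n-k) (by omega) (by omega) _ _ hzm).2).1 heq
          have hb1 : Nat.fib ((b::t₂).headI) = 1 := h.1
          simp only [List.headI] at hb1
          have hm4 : Nat.fib 4 ≤ Nat.fib b := Nat.fib_mono hb4
          have hf4 : Nat.fib 4 = 3 := rfl
          omega
        · have hj1 : 1 ≤ k - 1 := by omega
          have hjb : k - 1 < Nat.fib b := by omega
          obtain ⟨c, l₂, hz', hlt', hc2k, hclause⟩ := sub_fib b hb2 (k-1) hj1 hjb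
          have hcross : ∀ p ∈ c :: l₂, ∀ q ∈ t₂, p + 2 ≤ q := by
            intro p hp q hq
            have h1 := hlt' p hp
            have h2 := hbt q hq
            omega
          have hms : Nat.fib b - (k-1) + (t₂.map Nat.fib).sum = n - k := by omega
          have hzm : IsZeck (n - k) (c :: (l₂ ++ t₂)) := by
            have h := hz'.append hzt₂ hcross
            rw [hms] at h
            simpa using h
          intro heq
          have h := ((IH (n-k) (by omega) (by omega) _ _ hzm).2).1 heq
          obtain ⟨hc1, hr'1, hcc⟩ := h
          simp only [List.headI] at hc1
          have hceq : c = 2 := eq_two_of_fib (hz'.1 c (by simp)) hc1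
          cases l₂ with
          | nil =>
            have hs : Nat.fib c + (t₂.map Nat.fib).sum = n - k := by
              have h := hzm.2.2
              simpa using h
            omega
          | cons c₂ l₃ =>
            have hcc2k : Nat.fib c₂ ≤ 2 * k := by
              have := hclause hceq c₂ (by simp)
              omega
            have hcc_m : Nat.fib c₂ ≤ n - k := fib_mem_le hzm (by simp)
            rcases hcc with h | h
            · simp at h
            · have hgd : ((c :: ((c₂::l₃) ++ t₂)).getD 1 0) = c₂ := rfl
              rw [hgd] at h
              have := le_min hcc2k hcc_m
              omega
    · refine ⟨1, le_refl 1, le_min hr1 hn, ?_⟩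
      cases t with
      | nil =>
        have hn1 : n = 1 := by simp at hsum; omega
        have h0 : n - 1 = 0 := by omega
        rw [h0]
        exact grundy_zero _
      | cons b t₂ =>
        obtain ⟨hb2, hbt, hzt₂, hsum₂⟩ := zeck_cons hzt
        have hb4 : 4 ≤ b := hat b (by simp)
        have hm : n - 1 = ((b::t₂).map Nat.fib).sum := by omega
        have hzm : IsZeck (n - 1) (b::t₂) := by rw [hm]; exact hzt
        have hmpos : 0 < n - 1 := by
          have : 1 ≤ Nat.fib b := Nat.fib_pos.mpr (by omega)
          omega
        apply ((IH (n-1) (by omega) hmpos _ _ hzm).1).mpr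
        show min (2*1) (n-1) < Nat.fib b
        have hm4 : Nat.fib 4 ≤ Nat.fib b := Nat.fib_mono hb4
        have hf4 : Nat.fib 4 = 3 := rfl
        have := min_le_left (2*1) (n-1)
        omega


/-- For every positive integer `n` and every natural number `r`, `𝒢(n, r) = 1` if and only if
`z₁(n) = 1`, `r ≥ 1`, and either the Zeckendorf representation of `n` has only one part or
`r < z₂(n)`. -/
theorem grundy_eq_one_iff (n r : ℕ) (hn : 0 < n) (l : List ℕ) (hl : IsZeck n l) :
    grundy n r = 1 ↔
      Nat.fib l.headI = 1 ∧ 1 ≤ r ∧ (l.length = 1 ∨ r < Nat.fib (l.getD 1 0)) :=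
  (key n hn r l hl).2
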